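/- In the ICW model, the error term R̃_2 := (√n/√χ̃_n)·√(E[W_n]/β)·G_n'(√(β/E[W_n])·m̃_n) − G_n''(x_n*)·X̃_n satisfies E_{μ_n}[|R̃_2|] ≤ 2·√χ̃_n·(β/E[W_n])²·E[W_n³]·E_{μ_n}[X̃_n²]·n^{−1/2}. -/

import Mathlib

open Real BigOperators Finset MeasureTheory Filter ProbabilityTheory Topology

noncomputable section

namespace ICW

/-- The real spin value associated to a Boolean: `true ↦ 1`, `false ↦ -1`. -/
def spin (b : Bool) : ℝ := if b then 1 else -1

/-- `E[W_n^k] = (1/n) ∑_i w_i^k`. -/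
def EWk (n : ℕ) (w : Fin n → ℝ) (k : ℕ) : ℝ := (1 / n : ℝ) * ∑ i, (w i) ^ k

/-- `E[W_n] = (1/n) ∑_i w_i`. -/
def EW (n : ℕ) (w : Fin n → ℝ) : ℝ := (1 / n : ℝ) * ∑ i, w i

/-- The (negative) Hamiltonian of the inhomogeneous Curie–Weiss model. -/
def ham (n : ℕ) (w : Fin n → ℝ) (β h : ℝ) (σ : Fin n → Bool) : ℝ :=
  β / (2 * ∑ i, w i) * (∑ i, w i * spin (σ i)) ^ 2 + h * ∑ i, spin (σ i)

/-- Unnormalized Boltzmann–Gibbs weight. -/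
def wt (n : ℕ) (w : Fin n → ℝ) (β h : ℝ) (σ : Fin n → Bool) : ℝ :=
  Real.exp (ham n w β h σ)

/-- Partition function `Z_n`. -/
def Z (n : ℕ) (w : Fin n → ℝ) (β h : ℝ) : ℝ := ∑ σ : Fin n → Bool, wt n w β h σ

/-- Expectation under the ICW measure `μ_n`. -/
def icwE (n : ℕ) (w : Fin n → ℝ) (β h : ℝ) (f : (Fin n → Bool) → ℝ) : ℝ :=
  (∑ σ : Fin n → Bool, wt n w β h σ * f σ) / Z n w β h

open Classical in
/-- Probability of an event under the ICW measure `μ_n`. -/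
def icwP (n : ℕ) (w : Fin n → ℝ) (β h : ℝ) (A : (Fin n → Bool) → Prop) : ℝ :=
  icwE n w β h (fun σ => if A σ then 1 else 0)

/-- Magnetization `m_n`. -/
def mn (n : ℕ) (σ : Fin n → Bool) : ℝ := (1 / n : ℝ) * ∑ i, spin (σ i)

/-- Weighted magnetization `m̃_n`. -/
def mtil (n : ℕ) (w : Fin n → ℝ) (σ : Fin n → Bool) : ℝ :=
  (1 / n : ℝ) * ∑ i, w i * spin (σ i)

/-- Weighted magnetization leaving out spin `i`, `m̃_n^i`. -/
def mtilI (n : ℕ) (w : Fin n → ℝ) (σ : Fin n → Bool) (i : Fin n) : ℝ :=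
  (1 / n : ℝ) * ∑ j ∈ Finset.univ.erase i, w j * spin (σ j)

/-- Argument `√(β/E[W_n])·w_i·x + h`. -/
def arg (n : ℕ) (w : Fin n → ℝ) (β h x : ℝ) (i : Fin n) : ℝ :=
  Real.sqrt (β / EW n w) * w i * x + h

/-- `G_n(x)`. -/
def Gfun (n : ℕ) (w : Fin n → ℝ) (β h : ℝ) (x : ℝ) : ℝ :=
  x ^ 2 / 2 - (1 / n : ℝ) * ∑ i, Real.log (Real.cosh (arg n w β h x i))

/-- `G_n(x; s)` (with tilted argument `x+s`). -/
def GfunS (n : ℕ) (w : Fin n → ℝ) (β h : ℝ) (x s : ℝ) : ℝ :=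
  x ^ 2 / 2 - (1 / n : ℝ) * ∑ i, Real.log (Real.cosh (arg n w β h (x + s) i))

/-- `G_n'(x)`. -/
def Gfun' (n : ℕ) (w : Fin n → ℝ) (β h : ℝ) (x : ℝ) : ℝ :=
  x - (1 / n : ℝ) * ∑ i, Real.sqrt (β / EW n w) * w i * Real.tanh (arg n w β h x i)

/-- `G_n''(x)`. -/
def Gfun'' (n : ℕ) (w : Fin n → ℝ) (β h : ℝ) (x : ℝ) : ℝ :=
  1 - β / EW n w * ((1 / n : ℝ) * ∑ i, (1 - Real.tanh (arg n w β h x i) ^ 2) * (w i) ^ 2)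

/-- `x` has the same sign as `h` (and is `0` when `h = 0`). -/
def SameSign (h x : ℝ) : Prop :=
  (0 < h ∧ 0 < x) ∨ (h < 0 ∧ x < 0) ∨ (h = 0 ∧ x = 0)

/-- `M_n`, defined from a solution `x` of the fixed point equation. -/
def Mn (n : ℕ) (w : Fin n → ℝ) (β h x : ℝ) : ℝ :=
  (1 / n : ℝ) * ∑ i, Real.tanh (arg n w β h x i)

/-- The susceptibility `χ_n`, defined from a solution `x` of the fixed point equation. -/
def chiN (n : ℕ) (w : Fin n → ℝ) (β h x : ℝ) : ℝ :=
  1 - (1 / n : ℝ) * ∑ i, Real.tanh (arg n w β h x i) ^ 2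
    + β / EW n w * ((1 / n : ℝ) * ∑ i, (1 - Real.tanh (arg n w β h x i) ^ 2) * w i) ^ 2
      / Gfun'' n w β h x

/-- `M̃_n`. -/
def Mtil (n : ℕ) (w : Fin n → ℝ) (β x : ℝ) : ℝ := Real.sqrt (EW n w / β) * x

/-- `χ̃_n`. -/
def chiTil (n : ℕ) (w : Fin n → ℝ) (β h x : ℝ) : ℝ :=
  ((1 / n : ℝ) * ∑ i, (1 - Real.tanh (arg n w β h x i) ^ 2) * (w i) ^ 2) / Gfun'' n w β h x

/-- The normalized magnetization `X_n` (as a function of the configuration),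
where `x` is the relevant solution of the fixed point equation. -/
def Xn (n : ℕ) (w : Fin n → ℝ) (β h x : ℝ) (σ : Fin n → Bool) : ℝ :=
  Real.sqrt n * (mn n σ - Mn n w β h x) / Real.sqrt (chiN n w β h x)

/-- The normalized weighted magnetization `X̃_n`. -/
def Xtil (n : ℕ) (w : Fin n → ℝ) (β h x : ℝ) (σ : Fin n → Bool) : ℝ :=
  Real.sqrt n * (mtil n w σ - Mtil n w β x) / Real.sqrt (chiTil n w β h x)

/-- The standard normal cumulative distribution function. -/
def stdGaussCDF (z : ℝ) : ℝ := ((gaussianReal 0 1) (Set.Iic z)).toReal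

/-- Kolmogorov distance between the law of `X` under `μ_n` and the standard normal law. -/
def dK (n : ℕ) (w : Fin n → ℝ) (β h : ℝ) (X : (Fin n → Bool) → ℝ) : ℝ :=
  ⨆ z : ℝ, |icwP n w β h (fun σ => X σ ≤ z) - stdGaussCDF z|

/-- Weight regularity condition (i): the empirical weight distribution converges weakly to
the law `ν` of `W`, which is a probability measure with `E[W] > 0`. -/
def WeightRegI (w : (n : ℕ) → Fin n → ℝ) (ν : Measure ℝ) : Prop :=
  (∀ n i, 0 < w n i) ∧ IsProbabilityMeasure ν ∧
    (∀ f : BoundedContinuousFunction ℝ ℝ,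
      Tendsto (fun n : ℕ => (1 / n : ℝ) * ∑ i, f (w n i)) atTop (𝓝 (∫ x, f x ∂ν))) ∧
    Integrable (fun x => x) ν ∧ 0 < ∫ x, x ∂ν

/-- Weight regularity condition (ii): `E[W_n²] → E[W²] < ∞`. -/
def WeightRegII (w : (n : ℕ) → Fin n → ℝ) (ν : Measure ℝ) : Prop :=
  Integrable (fun x => x ^ 2) ν ∧
    Tendsto (fun n => EWk n (w n) 2) atTop (𝓝 (∫ x, x ^ 2 ∂ν))

/-- Weight regularity condition (iii): `E[W_n³] → E[W³] < ∞`. -/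
def WeightRegIII (w : (n : ℕ) → Fin n → ℝ) (ν : Measure ℝ) : Prop :=
  Integrable (fun x => x ^ 3) ν ∧
    Tendsto (fun n => EWk n (w n) 3) atTop (𝓝 (∫ x, x ^ 3 ∂ν))

/-- The critical inverse temperature `β_c = E[W]/E[W²]`. -/
def betaC (ν : Measure ℝ) : ℝ := (∫ x, x ∂ν) / (∫ x, x ^ 2 ∂ν)

/-- The uniqueness regime `U`. -/
def Uniq (ν : Measure ℝ) (β h : ℝ) : Prop :=
  (0 ≤ β ∧ h ≠ 0) ∨ (0 < β ∧ β < betaC ν ∧ h = 0)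

/-- Probability that spin `i` equals `+1` given the remaining spins. -/
def pPlus (n : ℕ) (w : Fin n → ℝ) (β h : ℝ) (σ : Fin n → Bool) (i : Fin n) : ℝ :=
  wt n w β h (Function.update σ i true) /
    (wt n w β h (Function.update σ i true) + wt n w β h (Function.update σ i false))

/-- Conditional expectation given `F_n` (the σ-algebra generated by `σ`) of a function of
`(σ, I, σ'_I)`, where `I` is uniform on `[n]` and `σ'_I` is resampled from the conditional
distribution of the `I`-th spin given the others. -/
def condAvg (n : ℕ) (w : Fin n → ℝ) (β h : ℝ)
    (f : (Fin n → Bool) → Fin n → Bool → ℝ) (σ : Fin n → Bool) : ℝ :=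
  (1 / n : ℝ) * ∑ i, (pPlus n w β h σ i * f σ i true + (1 - pPlus n w β h σ i) * f σ i false)

/-- The increment `X_n − X'_n` as a function of `(σ, I, σ'_I)`. -/
def XnD (n : ℕ) (w : Fin n → ℝ) (β h x : ℝ) (σ : Fin n → Bool) (i : Fin n) (b : Bool) : ℝ :=
  (spin (σ i) - spin b) / (Real.sqrt n * Real.sqrt (chiN n w β h x))

/-- The increment `X̃_n − X̃'_n` as a function of `(σ, I, σ'_I)`. -/
def XtilD (n : ℕ) (w : Fin n → ℝ) (β h x : ℝ) (σ : Fin n → Bool) (i : Fin n) (b : Bool) : ℝ :=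
  w i * (spin (σ i) - spin b) / (Real.sqrt n * Real.sqrt (chiTil n w β h x))

/-- The constant `c` in the regression equation. -/
def cconst (n : ℕ) (w : Fin n → ℝ) (β h x : ℝ) : ℝ :=
  Real.sqrt (chiTil n w β h x) / Real.sqrt (chiN n w β h x) * (β / EW n w) *
    ((1 / n : ℝ) * ∑ i, (1 - Real.tanh (arg n w β h x i) ^ 2) * w i)

end ICW

namespace ICW

/-- Error term `R̃_2` (with `1/σ² = G_n''(x_n*)`). -/
def Rtil2 (n : ℕ) (w : Fin n → ℝ) (β h x : ℝ) (σ : Fin n → Bool) : ℝ :=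
  Real.sqrt n / Real.sqrt (chiTil n w β h x) * Real.sqrt (EW n w / β) *
    Gfun' n w β h (Real.sqrt (β / EW n w) * mtil n w σ)
  - Gfun'' n w β h x * Xtil n w β h x σ

/-! ### Auxiliary lemmas about `tanh` -/

lemma tanh_sq_lt_one (t : ℝ) : Real.tanh t ^ 2 < 1 := by
  have hc := Real.cosh_pos t
  rw [Real.tanh_eq_sinh_div_cosh, div_pow, div_lt_one (by positivity)]
  nlinarith [Real.cosh_sq t]

lemma abs_tanh_le_one (t : ℝ) : |Real.tanh t| ≤ 1 := by
  nlinarith [tanh_sq_lt_one t, abs_nonneg (Real.tanh t), sq_abs (Real.tanh t)]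

lemma hasDerivAt_tanh (t : ℝ) : HasDerivAt Real.tanh (1 - Real.tanh t ^ 2) t := by
  have hc := Real.cosh_pos t
  have h := (Real.hasDerivAt_sinh t).div (Real.hasDerivAt_cosh t) (ne_of_gt hc)
  have h2 : Real.tanh = Real.sinh / Real.cosh :=
    funext fun x => Real.tanh_eq_sinh_div_cosh x
  have key : (Real.cosh t * Real.cosh t - Real.sinh t * Real.sinh t) / Real.cosh t ^ 2
      = 1 - Real.tanh t ^ 2 := by
    rw [Real.tanh_eq_sinh_div_cosh, div_pow]
    field_simp
  rw [← h2] at h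
  rwa [key] at h

lemma tanh_lipschitz (p q : ℝ) : |Real.tanh p - Real.tanh q| ≤ |p - q| := by
  have := Convex.norm_image_sub_le_of_norm_hasDerivWithin_le
    (f := Real.tanh) (f' := fun z => 1 - Real.tanh z ^ 2) (C := 1) (s := Set.univ)
    (fun z _ => (hasDerivAt_tanh z).hasDerivWithinAt)
    (fun z _ => by
      show ‖1 - Real.tanh z ^ 2‖ ≤ 1
      rw [Real.norm_eq_abs, abs_le]
      constructor <;> nlinarith [tanh_sq_lt_one z, sq_nonneg (Real.tanh z)])
    convex_univ (Set.mem_univ q) (Set.mem_univ p)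
  simpa using this

lemma tanh_taylor (t s : ℝ) :
    |Real.tanh t + (1 - Real.tanh t ^ 2) * s - Real.tanh (t + s)| ≤ 2 * s ^ 2 := by
  set g : ℝ → ℝ := fun u => Real.tanh (t + u) - Real.tanh t - (1 - Real.tanh t ^ 2) * u with hg
  have hder : ∀ u ∈ Set.uIcc (0 : ℝ) s,
      HasDerivWithinAt g ((fun u => (1 - Real.tanh (t + u) ^ 2) - (1 - Real.tanh t ^ 2)) u)
        (Set.uIcc (0 : ℝ) s) u := by
    intro u _
    have h1 : HasDerivAt (fun u : ℝ => Real.tanh (t + u)) (1 - Real.tanh (t + u) ^ 2) u := by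
      have := (hasDerivAt_tanh (t + u)).comp u ((hasDerivAt_id u).const_add t)
      simpa [Function.comp_def] using this
    have h2 : HasDerivAt g ((1 - Real.tanh (t + u) ^ 2) - (1 - Real.tanh t ^ 2)) u := by
      have := (h1.sub_const (Real.tanh t)).sub
        ((hasDerivAt_id u).const_mul (1 - Real.tanh t ^ 2))
      simpa [hg, mul_comm, Pi.sub_def] using this
    exact h2.hasDerivWithinAt
  have hbound : ∀ u ∈ Set.uIcc (0 : ℝ) s,
      ‖(fun u => (1 - Real.tanh (t + u) ^ 2) - (1 - Real.tanh t ^ 2)) u‖ ≤ 2 * |s| := by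
    intro u hu
    show ‖(1 - Real.tanh (t + u) ^ 2) - (1 - Real.tanh t ^ 2)‖ ≤ 2 * |s|
    have hu' : |u| ≤ |s| := by
      rcases Set.mem_uIcc.mp hu with ⟨h1, h2⟩ | ⟨h1, h2⟩ <;>
        exact abs_le.mpr ⟨by linarith [neg_abs_le s, le_abs_self s],
          by linarith [le_abs_self s, neg_abs_le s]⟩
    have e : (1 - Real.tanh (t + u) ^ 2) - (1 - Real.tanh t ^ 2)
        = (Real.tanh t - Real.tanh (t + u)) * (Real.tanh t + Real.tanh (t + u)) := by ring
    rw [Real.norm_eq_abs, e, abs_mul]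
    have l1 : |Real.tanh t - Real.tanh (t + u)| ≤ |u| := by
      have := tanh_lipschitz t (t + u)
      simpa [abs_sub_comm] using this
    have l2 : |Real.tanh t + Real.tanh (t + u)| ≤ 2 := by
      calc |Real.tanh t + Real.tanh (t + u)| ≤ |Real.tanh t| + |Real.tanh (t + u)| := abs_add_le _ _
        _ ≤ 2 := by linarith [abs_tanh_le_one t, abs_tanh_le_one (t + u)]
    calc |Real.tanh t - Real.tanh (t + u)| * |Real.tanh t + Real.tanh (t + u)|
        ≤ |u| * 2 := mul_le_mul l1 l2 (abs_nonneg _) (abs_nonneg _)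
      _ ≤ 2 * |s| := by linarith
  have hmv := Convex.norm_image_sub_le_of_norm_hasDerivWithin_le hder hbound
    (convex_uIcc (0 : ℝ) s) Set.left_mem_uIcc Set.right_mem_uIcc
  have hg0 : g 0 = 0 := by simp [hg]
  rw [Real.norm_eq_abs, Real.norm_eq_abs, hg0, sub_zero, sub_zero] at hmv
  have : |Real.tanh t + (1 - Real.tanh t ^ 2) * s - Real.tanh (t + s)| = |g s| := by
    rw [hg]; rw [abs_sub_comm]; ring_nf
  rw [this]
  calc |g s| ≤ 2 * |s| * |s| := hmv
    _ = 2 * s ^ 2 := by rw [mul_assoc, ← abs_mul, ← sq, abs_sq]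

lemma sqrt_div_identity (nr c d S chi : ℝ) (hnr : 0 < nr) (hchi : 0 < chi)
    (hn2 : Real.sqrt nr ^ 2 = nr) (hc2 : Real.sqrt chi ^ 2 = chi) :
    Real.sqrt nr / Real.sqrt chi * ((1 / nr) * (2 * c ^ 2 * d ^ 2 * S))
      = 2 * Real.sqrt chi * c ^ 2 * (1 / nr * S) * (nr * d ^ 2 / chi) / Real.sqrt nr := by
  have h1 : Real.sqrt nr ≠ 0 := by positivity
  have h2 : Real.sqrt chi ≠ 0 := by positivity
  field_simp
  linear_combination (c ^ 2 * d ^ 2 * S * chi) * hn2 -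
    (c ^ 2 * d ^ 2 * S * nr) * hc2

/-- **Bound on the error term `R̃_2`**:
`E[|R̃_2|] ≤ 2·√χ̃_n·(β/E[W_n])²·E[W_n³]·E[X̃_n²]·n^{−1/2}`. -/
theorem Rtil2_bound (n : ℕ) (hn : 0 < n) (w : Fin n → ℝ) (hw : ∀ i, 0 < w i)
    (β h : ℝ) (hβ : 0 < β) (x : ℝ) (hx : Gfun' n w β h x = 0) (hsign : SameSign h x)
    (hG'' : 0 < Gfun'' n w β h x) :
    icwE n w β h (fun σ => |Rtil2 n w β h x σ|)
      ≤ 2 * Real.sqrt (chiTil n w β h x) * (β / EW n w) ^ 2 * EWk n w 3 *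
          icwE n w β h (fun σ => Xtil n w β h x σ ^ 2) / Real.sqrt n := by
  have hn' : (0 : ℝ) < n := Nat.cast_pos.mpr hn
  have hEsum : 0 < ∑ i, w i :=
    Finset.sum_pos (fun i _ => hw i) ⟨⟨0, hn⟩, Finset.mem_univ _⟩
  have hE : 0 < EW n w := by unfold EW; positivity
  set a := Real.sqrt (β / EW n w) with ha
  set b := Real.sqrt (EW n w / β) with hb
  have hba : b * a = 1 := by
    rw [hb, ha, ← Real.sqrt_mul (by positivity) _,
      show EW n w / β * (β / EW n w) = 1 by field_simp]
    exact Real.sqrt_one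
  have ha2 : a ^ 2 = β / EW n w := Real.sq_sqrt (by positivity)
  have hchi : 0 < chiTil n w β h x := by
    unfold chiTil
    apply div_pos _ hG''
    apply mul_pos (by positivity)
    apply Finset.sum_pos _ ⟨⟨0, hn⟩, Finset.mem_univ _⟩
    intro i _
    have h1 := tanh_sq_lt_one (arg n w β h x i)
    have h2 := hw i
    have h3 : (0 : ℝ) < 1 - Real.tanh (arg n w β h x i) ^ 2 := by linarith
    positivity
  have hsc : 0 < Real.sqrt (chiTil n w β h x) := Real.sqrt_pos.mpr hchi
  have hsn : 0 < Real.sqrt n := Real.sqrt_pos.mpr hn'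
  have hchisq : Real.sqrt (chiTil n w β h x) ^ 2 = chiTil n w β h x := Real.sq_sqrt hchi.le
  have hnsq : Real.sqrt n ^ 2 = (n : ℝ) := Real.sq_sqrt hn'.le
  have hMb : Mtil n w β x = b * x := by unfold Mtil; rw [← hb]
  have hMt : Mtil n w β x = (1 / n : ℝ) * ∑ i, w i * Real.tanh (arg n w β h x i) := by
    have hx' : x = (1 / n : ℝ) * ∑ i, a * w i * Real.tanh (arg n w β h x i) := by
      have h0 := hx
      unfold Gfun' at h0
      rw [← ha] at h0
      linarith
    have h1 : ∑ i, a * w i * Real.tanh (arg n w β h x i)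
        = a * ∑ i, w i * Real.tanh (arg n w β h x i) := by
      rw [Finset.mul_sum]
      exact Finset.sum_congr rfl fun i _ => by ring
    rw [hMb]
    linear_combination b * hx' + (1 / (n : ℝ)) * b * h1 +
      ((1 / (n : ℝ)) * ∑ i, w i * Real.tanh (arg n w β h x i)) * hba
  have hpt : ∀ σ : Fin n → Bool, |Rtil2 n w β h x σ| ≤
      2 * Real.sqrt (chiTil n w β h x) * (β / EW n w) ^ 2 * EWk n w 3 *
        Xtil n w β h x σ ^ 2 / Real.sqrt n := by
    intro σ
    set m := mtil n w σ with hm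
    set δ := m - Mtil n w β x with hδ
    set S1 := ∑ i, w i * Real.tanh (arg n w β h x i + β / EW n w * w i * δ) with hS1
    set S2 := ∑ i, w i * Real.tanh (arg n w β h x i) with hS2
    set S3 := ∑ i, (1 - Real.tanh (arg n w β h x i) ^ 2) * w i ^ 2 with hS3
    have hargeq : ∀ i, arg n w β h (a * m) i = arg n w β h x i + β / EW n w * w i * δ := by
      intro i
      unfold arg
      rw [← ha, hδ, hMb]
      linear_combination (w i * m - w i * (b * x)) * ha2 + (a * w i * x) * hba
    have hG'eq : b * Gfun' n w β h (a * m) = m - (1 / n : ℝ) * S1 := by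
      unfold Gfun'
      rw [← ha]
      have h1 : ∑ i, a * w i * Real.tanh (arg n w β h (a * m) i) = a * S1 := by
        rw [hS1, Finset.mul_sum]
        exact Finset.sum_congr rfl fun i _ => by rw [hargeq i]; ring
      rw [h1]
      linear_combination (m - (1 / n : ℝ) * S1) * hba
    have hG2 : Gfun'' n w β h x = 1 - β / EW n w * ((1 / n : ℝ) * S3) := by
      unfold Gfun''
      rw [hS3]
    have hXt : Xtil n w β h x σ = Real.sqrt n * δ / Real.sqrt (chiTil n w β h x) := by
      unfold Xtil
      rw [← hm, hδ]
    have key : Rtil2 n w β h x σ =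
        Real.sqrt n / Real.sqrt (chiTil n w β h x) *
          ((1 / n : ℝ) * (S2 + β / EW n w * δ * S3 - S1)) := by
      have e0 : Rtil2 n w β h x σ
          = Real.sqrt n / Real.sqrt (chiTil n w β h x) * (b * Gfun' n w β h (a * m))
            - Gfun'' n w β h x * Xtil n w β h x σ := by
        unfold Rtil2
        rw [← ha, ← hb, ← hm]
        ring
      have hmδ : m = δ + (1 / n : ℝ) * S2 := by rw [hδ, hMt]; ring
      rw [e0, hG'eq, hG2, hXt, hmδ]
      ring
    have hbound1 : |S2 + β / EW n w * δ * S3 - S1|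
        ≤ 2 * (β / EW n w) ^ 2 * δ ^ 2 * ∑ i, w i ^ 3 := by
      have e : S2 + β / EW n w * δ * S3 - S1 = ∑ i, (w i * Real.tanh (arg n w β h x i)
          + β / EW n w * δ * ((1 - Real.tanh (arg n w β h x i) ^ 2) * w i ^ 2)
          - w i * Real.tanh (arg n w β h x i + β / EW n w * w i * δ)) := by
        rw [hS1, hS2, hS3, Finset.mul_sum, ← Finset.sum_add_distrib, ← Finset.sum_sub_distrib]
      rw [e]
      calc |∑ i, (w i * Real.tanh (arg n w β h x i)
              + β / EW n w * δ * ((1 - Real.tanh (arg n w β h x i) ^ 2) * w i ^ 2)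
              - w i * Real.tanh (arg n w β h x i + β / EW n w * w i * δ))|
          ≤ ∑ i, |w i * Real.tanh (arg n w β h x i)
              + β / EW n w * δ * ((1 - Real.tanh (arg n w β h x i) ^ 2) * w i ^ 2)
              - w i * Real.tanh (arg n w β h x i + β / EW n w * w i * δ)| :=
            Finset.abs_sum_le_sum_abs _ _
        _ ≤ ∑ i, 2 * (β / EW n w) ^ 2 * δ ^ 2 * w i ^ 3 := by
            apply Finset.sum_le_sum
            intro i _
            have e2 : w i * Real.tanh (arg n w β h x i)
                + β / EW n w * δ * ((1 - Real.tanh (arg n w β h x i) ^ 2) * w i ^ 2)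
                - w i * Real.tanh (arg n w β h x i + β / EW n w * w i * δ)
                = w i * (Real.tanh (arg n w β h x i)
                  + (1 - Real.tanh (arg n w β h x i) ^ 2) * (β / EW n w * w i * δ)
                  - Real.tanh (arg n w β h x i + β / EW n w * w i * δ)) := by ring
            rw [e2, abs_mul, abs_of_pos (hw i)]
            have ht := tanh_taylor (arg n w β h x i) (β / EW n w * w i * δ)
            calc w i * |Real.tanh (arg n w β h x i)
                  + (1 - Real.tanh (arg n w β h x i) ^ 2) * (β / EW n w * w i * δ)
                  - Real.tanh (arg n w β h x i + β / EW n w * w i * δ)|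
                ≤ w i * (2 * (β / EW n w * w i * δ) ^ 2) :=
                  mul_le_mul_of_nonneg_left ht (hw i).le
              _ = 2 * (β / EW n w) ^ 2 * δ ^ 2 * w i ^ 3 := by ring
        _ = 2 * (β / EW n w) ^ 2 * δ ^ 2 * ∑ i, w i ^ 3 := by rw [Finset.mul_sum]
    have hXsq : Xtil n w β h x σ ^ 2 = n * δ ^ 2 / chiTil n w β h x := by
      rw [hXt, div_pow, mul_pow, hnsq, hchisq]
    have hfin : Real.sqrt n / Real.sqrt (chiTil n w β h x) *
          ((1 / n : ℝ) * (2 * (β / EW n w) ^ 2 * δ ^ 2 * ∑ i, w i ^ 3))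
        = 2 * Real.sqrt (chiTil n w β h x) * (β / EW n w) ^ 2 * EWk n w 3 *
            ((n : ℝ) * δ ^ 2 / chiTil n w β h x) / Real.sqrt n := by
      unfold EWk
      exact sqrt_div_identity (n : ℝ) (β / EW n w) δ (∑ i, w i ^ 3) (chiTil n w β h x)
        hn' hchi hnsq hchisq
    rw [key, abs_mul, abs_of_nonneg (by positivity :
        (0 : ℝ) ≤ Real.sqrt n / Real.sqrt (chiTil n w β h x)), abs_mul,
      abs_of_nonneg (by positivity : (0 : ℝ) ≤ (1 / n : ℝ)), hXsq, ← hfin]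
    apply mul_le_mul_of_nonneg_left _ (by positivity)
    exact mul_le_mul_of_nonneg_left hbound1 (by positivity)
  have hZ : 0 < Z n w β h := Finset.sum_pos (fun τ _ => Real.exp_pos _) Finset.univ_nonempty
  have hmono : (∑ σ : Fin n → Bool, wt n w β h σ * |Rtil2 n w β h x σ|)
      ≤ ∑ σ : Fin n → Bool, wt n w β h σ *
          (2 * Real.sqrt (chiTil n w β h x) * (β / EW n w) ^ 2 * EWk n w 3 *
            Xtil n w β h x σ ^ 2 / Real.sqrt n) :=
    Finset.sum_le_sum fun σ _ => mul_le_mul_of_nonneg_left (hpt σ) (Real.exp_pos _).le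
  have hsum2 : (∑ σ : Fin n → Bool, wt n w β h σ *
        (2 * Real.sqrt (chiTil n w β h x) * (β / EW n w) ^ 2 * EWk n w 3 *
          Xtil n w β h x σ ^ 2 / Real.sqrt n))
      = (2 * Real.sqrt (chiTil n w β h x) * (β / EW n w) ^ 2 * EWk n w 3 / Real.sqrt n) *
          ∑ σ : Fin n → Bool, wt n w β h σ * Xtil n w β h x σ ^ 2 := by
    rw [Finset.mul_sum]
    exact Finset.sum_congr rfl fun σ _ => by ring
  show (∑ σ : Fin n → Bool, wt n w β h σ * |Rtil2 n w β h x σ|) / Z n w β h ≤ _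
  calc (∑ σ : Fin n → Bool, wt n w β h σ * |Rtil2 n w β h x σ|) / Z n w β h
      ≤ (∑ σ : Fin n → Bool, wt n w β h σ *
          (2 * Real.sqrt (chiTil n w β h x) * (β / EW n w) ^ 2 * EWk n w 3 *
            Xtil n w β h x σ ^ 2 / Real.sqrt n)) / Z n w β h := by
        exact (div_le_div_iff_of_pos_right hZ).mpr hmono
    _ = 2 * Real.sqrt (chiTil n w β h x) * (β / EW n w) ^ 2 * EWk n w 3 *
          icwE n w β h (fun σ => Xtil n w β h x σ ^ 2) / Real.sqrt n := by
        rw [hsum2]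
        unfold icwE
        ring

end ICW
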